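/- For the DTW distance over the reals with ℓ1 cost, for any nonempty sequence r with r ≠ (0) (the single-character sequence 0), the DTW distance from the one-character sequence (1) to r equals the DTW distance from the two-character sequence (1,1) to r. -/
import Mathlib


/-- `IsExpansion x x'` : `x'` is obtained from `x` by duplicating each character an
arbitrary positive number of times. -/
def IsExpansion (x x' : List ℝ) : Prop :=
  ∃ ks : List ℕ, ks.length = x.length ∧ (∀ k ∈ ks, 0 < k) ∧
    x' = (List.zipWith (fun k (a : ℝ) => List.replicate k a) ks x).flatten

/-- The dynamic time warping distance with `ℓ₁` character cost `|a - b|`: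
the minimum over all pairs of equal-length expansions of the `ℓ₁` distance. -/
noncomputable def dtw (x y : List ℝ) : ℝ :=
  sInf { c | ∃ x' y', IsExpansion x x' ∧ IsExpansion y y' ∧ x'.length = y'.length ∧
    c = (List.zipWith (fun a b => |a - b|) x' y').sum }

lemma flatten_len (ks : List ℕ) (x : List ℝ) (h : ks.length = x.length) :
    ((List.zipWith (fun k (a : ℝ) => List.replicate k a) ks x).flatten).length = ks.sum := by
  induction ks generalizing x with
  | nil => simp
  | cons k kt ih =>
    cases x with
    | nil => simp at h
    | cons a t =>
      simp only [List.zipWith_cons_cons, List.flatten_cons, List.length_append,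
        List.length_replicate, List.sum_cons]
      rw [ih t (by simpa using h)]

lemma len_le_sum (ks : List ℕ) (hpos : ∀ k ∈ ks, 0 < k) : ks.length ≤ ks.sum := by
  induction ks with
  | nil => simp
  | cons k kt ih =>
    have := hpos k (by simp)
    have := ih (fun m hm => hpos m (by simp [hm]))
    simp only [List.length_cons, List.sum_cons]; omega

lemma exp_length_ge {x x' : List ℝ} (h : IsExpansion x x') : x.length ≤ x'.length := by
  obtain ⟨ks, hlen, hpos, hx⟩ := h
  rw [hx, flatten_len ks x hlen, ← hlen]
  exact len_le_sum ks hpos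

lemma exp_one {x' : List ℝ} : IsExpansion [(1 : ℝ)] x' ↔
    ∃ k, 0 < k ∧ x' = List.replicate k (1 : ℝ) := by
  constructor
  · rintro ⟨ks, hlen, hpos, hx⟩
    match ks, hlen with
    | [k], _ =>
      exact ⟨k, hpos k (by simp), by simpa using hx⟩
  · rintro ⟨k, hk, rfl⟩
    refine ⟨[k], by simp, ?_, by simp⟩
    intro m hm; simp at hm; omega

lemma exp_one_one {x' : List ℝ} : IsExpansion [(1 : ℝ), 1] x' ↔
    ∃ k, 2 ≤ k ∧ x' = List.replicate k (1 : ℝ) := by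
  constructor
  · rintro ⟨ks, hlen, hpos, hx⟩
    match ks, hlen with
    | [k1, k2], _ =>
      refine ⟨k1 + k2, ?_, ?_⟩
      · have h1 := hpos k1 (by simp); have h2 := hpos k2 (by simp); omega
      · rw [hx]; simp only [List.zipWith_cons_cons, List.zipWith_nil_right,
          List.flatten_cons, List.flatten_nil, List.append_nil, List.replicate_add]
  · rintro ⟨k, hk, rfl⟩
    refine ⟨[1, k - 1], by simp, ?_, ?_⟩
    · intro m hm; simp at hm; omega
    · have h2 : 1 + (k - 1) = k := by omega
      simp only [List.zipWith_cons_cons, List.zipWith_nil_right, List.flatten_cons,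
        List.flatten_nil, List.append_nil, ← List.replicate_add, h2]

lemma exp_len_one {r r' : List ℝ} (h : IsExpansion r r') (h1 : r'.length = 1) :
    r = r' := by
  obtain ⟨ks, hlen, hpos, hx⟩ := h
  rw [hx, flatten_len ks r hlen] at h1
  have hls := len_le_sum ks hpos
  match r, ks, hlen with
  | [], [], _ => simp at h1
  | [a], [k], _ =>
    have : k = 1 := by simpa using h1
    subst this
    exact (by simpa using hx : r' = [a]).symm
  | a :: b :: t, k1 :: k2 :: kt, _ =>
    exfalso
    simp only [List.length_cons, List.sum_cons] at hls h1
    omega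

theorem dtw_one_eq_dtw_one_one
    (r : List ℝ) (hne : r ≠ []) (hbin : ∀ c ∈ r, c = 0 ∨ c = 1)
    (hr0 : r ≠ [(0 : ℝ)]) :
    dtw [(1 : ℝ)] r = dtw [(1 : ℝ), 1] r := by
  unfold dtw
  congr 1
  ext c
  simp only [Set.mem_setOf_eq]
  constructor
  · rintro ⟨x', y', hx, hy, hlen, hc⟩
    obtain ⟨k, hk, rfl⟩ := exp_one.mp hx
    rw [List.length_replicate] at hlen
    rcases Nat.lt_or_ge y'.length 2 with h2 | h2
    · have hge := exp_length_ge hy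
      have hrne : 1 ≤ r.length := List.length_pos_iff.mpr hne
      have hy1 : y'.length = 1 := by omega
      obtain ⟨a, rfl⟩ := List.length_eq_one_iff.mp hy1
      have hra : r = [a] := exp_len_one hy hy1
      have ha : a = 1 := by
        rcases hbin a (by rw [hra]; simp) with h0 | h1
        · exact absurd (h0 ▸ hra) hr0
        · exact h1
      subst ha
      have hk1 : k = 1 := by omega
      subst hk1
      have hc0 : c = 0 := by simpa using hc
      refine ⟨[1, 1], [1, 1], ?_, ?_, rfl, by rw [hc0]; norm_num⟩
      · exact ⟨[1, 1], by simp, by intro m hm; simp at hm; omega, by simp⟩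
      · refine ⟨[2], by simp [hra], by intro m hm; simp at hm; omega, ?_⟩
        rw [hra]; simp [List.replicate]
    · exact ⟨List.replicate k 1, y', exp_one_one.mpr ⟨k, by omega, rfl⟩, hy,
        by simpa using hlen, hc⟩
  · rintro ⟨x', y', hx, hy, hlen, hc⟩
    obtain ⟨k, hk, rfl⟩ := exp_one_one.mp hx
    exact ⟨List.replicate k 1, y', exp_one.mpr ⟨k, by omega, rfl⟩, hy, hlen, hc⟩
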